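/- The ring Z/p²Z, as a module over itself, satisfies: for all nonzero submodules N, K there is a nonzero homomorphism N → K; but End(Z/p²Z) ≅ Z/p²Z is not a prime ring. (Hence the converse of 'retractable with prime endomorphism ring implies R-pid-first' fails.) -/

import Mathlib

lemma aux14 (p : ℕ) (hp : p.Prime) (x : ZMod (p ^ 2)) (hx : x ≠ 0) :
    ∃ c : ZMod (p ^ 2), c * x = (p : ZMod (p ^ 2)) := by
  haveI : NeZero (p ^ 2) := ⟨pow_ne_zero 2 hp.ne_zero⟩
  set a := x.val with ha
  have hax : ((a : ℕ) : ZMod (p ^ 2)) = x := by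
    simp [ha, ZMod.natCast_val, ZMod.cast_id]
  have ha0 : a ≠ 0 := by
    intro h
    apply hx
    rw [← hax, h, Nat.cast_zero]
  have halt : a < p ^ 2 := ZMod.val_lt x
  set d := Nat.gcd a (p ^ 2) with hd
  have hdvd : d ∣ p ^ 2 := Nat.gcd_dvd_right _ _
  obtain ⟨i, hi2, hdi⟩ := (Nat.dvd_prime_pow hp).mp hdvd
  have hi1 : i ≤ 1 := by
    by_contra h
    have hi2' : i = 2 := by omega
    have h2 : p ^ 2 ∣ a := by
      have := Nat.gcd_dvd_left a (p ^ 2)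
      rwa [← hd, hdi, hi2'] at this
    have := Nat.le_of_dvd (Nat.pos_of_ne_zero ha0) h2
    omega
  have hdp : d ∣ p := hdi ▸ pow_dvd_pow p hi1 |>.trans (by simp)
  have hbez : (d : ℤ) = a * Nat.gcdA a (p ^ 2) + (p ^ 2) * Nat.gcdB a (p ^ 2) :=
    Nat.gcd_eq_gcd_ab a (p ^ 2)
  have hcast : ((d : ℤ) : ZMod (p ^ 2)) = ((Nat.gcdA a (p ^ 2) : ZMod (p ^ 2))) * x := by
    have hps : ((p : ZMod (p ^ 2))) ^ 2 = 0 := by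
      rw [← Nat.cast_pow, ZMod.natCast_self]
    rw [hbez]
    push_cast
    rw [hps, hax]
    ring
  obtain ⟨e, he⟩ := hdp
  refine ⟨(e : ZMod (p ^ 2)) * (Nat.gcdA a (p ^ 2) : ZMod (p ^ 2)), ?_⟩
  have : ((p : ℕ) : ZMod (p ^ 2)) = (e : ZMod (p ^ 2)) * (d : ZMod (p ^ 2)) := by
    rw [← Nat.cast_mul, he, mul_comm]
  rw [this, mul_assoc]
  congr 1
  rw [← hcast]
  push_cast
  rfl

lemma aux14' (p : ℕ) (hp : p.Prime) (x : ZMod (p ^ 2)) (hx : ¬ IsUnit x) :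
    ∃ m : ZMod (p ^ 2), x = m * (p : ZMod (p ^ 2)) := by
  haveI : NeZero (p ^ 2) := ⟨pow_ne_zero 2 hp.ne_zero⟩
  have hax : ((x.val : ℕ) : ZMod (p ^ 2)) = x := by
    simp [ZMod.natCast_val, ZMod.cast_id]
  rw [← hax] at hx
  rw [ZMod.isUnit_iff_coprime] at hx
  have hgcd : Nat.gcd x.val (p ^ 2) ≠ 1 := hx
  have hdvd : Nat.gcd x.val (p ^ 2) ∣ p ^ 2 := Nat.gcd_dvd_right _ _
  obtain ⟨i, hi2, hdi⟩ := (Nat.dvd_prime_pow hp).mp hdvd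
  have hi : 1 ≤ i := by
    rcases Nat.eq_zero_or_pos i with h | h
    · exact absurd (by rw [hdi, h, pow_zero]) hgcd
    · exact h
  have hpd : p ∣ x.val := by
    have : p ∣ Nat.gcd x.val (p ^ 2) := hdi ▸ dvd_pow_self p (by omega)
    exact this.trans (Nat.gcd_dvd_left _ _)
  obtain ⟨m, hm⟩ := hpd
  exact ⟨(m : ZMod (p ^ 2)), by rw [← hax, hm]; push_cast; ring⟩

lemma aux14p (p : ℕ) (hp : p.Prime) : (p : ZMod (p ^ 2)) ≠ 0 := by
  haveI : NeZero (p ^ 2) := ⟨pow_ne_zero 2 hp.ne_zero⟩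
  rw [Ne, ZMod.natCast_eq_zero_iff]
  intro h
  have := Nat.le_of_dvd hp.pos h
  nlinarith [hp.two_le]

set_option maxHeartbeats 1000000 in
/-- For `R = ℤ/p²ℤ`: between any two nonzero submodules of `R` there is a nonzero
homomorphism, `End_R(R) ≅ R`, yet `R` is not a prime ring; hence the converse of
"retractable with prime endomorphism ring implies `R`-pid-first" fails. -/
theorem stmt14 (p : ℕ) (hp : p.Prime) :
    (∀ N K : Submodule (ZMod (p ^ 2)) (ZMod (p ^ 2)), N ≠ ⊥ → K ≠ ⊥ →
        ∃ f : N →ₗ[ZMod (p ^ 2)] K, f ≠ 0) ∧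
    Nonempty (Module.End (ZMod (p ^ 2)) (ZMod (p ^ 2)) ≃+* ZMod (p ^ 2)) ∧
    ¬ (∀ I J : Ideal (ZMod (p ^ 2)), I ≠ ⊥ → J ≠ ⊥ → I * J ≠ ⊥) := by
  haveI : NeZero (p ^ 2) := ⟨pow_ne_zero 2 hp.ne_zero⟩
  refine ⟨?_, ⟨(RingEquiv.moduleEndSelf (ZMod (p ^ 2))).symm.trans
      (RingEquiv.toOpposite (ZMod (p ^ 2))).symm⟩, ?_⟩
  · intro N K hN hK
    obtain ⟨k, hkK, hk0⟩ := Submodule.exists_mem_ne_zero_of_ne_bot hK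
    obtain ⟨c, hc⟩ := aux14 p hp k hk0
    have hpK : (p : ZMod (p ^ 2)) ∈ K := hc ▸ K.smul_mem c hkK
    by_cases h1 : (1 : ZMod (p ^ 2)) ∈ N
    · refine ⟨(LinearMap.toSpanSingleton _ K ⟨(p : ZMod (p ^ 2)), hpK⟩).comp N.subtype, ?_⟩
      intro h
      have := LinearMap.congr_fun h ⟨1, h1⟩
      simp only [LinearMap.comp_apply, Submodule.subtype_apply,
        LinearMap.toSpanSingleton_apply, one_smul, LinearMap.zero_apply] at this
      exact aux14p p hp (congrArg Subtype.val this)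
    · have hNK : N ≤ K := by
        intro x hxN
        have hxu : ¬ IsUnit x := by
          intro hu
          obtain ⟨u, rfl⟩ := hu
          exact h1 (by simpa using N.smul_mem (u⁻¹ : (ZMod (p ^ 2))ˣ).1 hxN)
        obtain ⟨m, hm⟩ := aux14' p hp x hxu
        rw [hm]
        exact K.smul_mem m hpK
      obtain ⟨n, hnN, hn0⟩ := Submodule.exists_mem_ne_zero_of_ne_bot hN
      refine ⟨Submodule.inclusion hNK, ?_⟩
      intro h
      have := LinearMap.congr_fun h ⟨n, hnN⟩
      exact hn0 (congrArg Subtype.val this)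
  · intro h
    have hps : (Ideal.span {(p : ZMod (p ^ 2))} : Ideal (ZMod (p ^ 2))) ≠ ⊥ := by
      rw [Ne, Ideal.span_singleton_eq_bot]
      exact aux14p p hp
    refine h _ _ hps hps ?_
    have hpp : (p : ZMod (p ^ 2)) * p = 0 := by
      rw [← Nat.cast_mul, ← sq, ZMod.natCast_self]
    rw [Ideal.span_singleton_mul_span_singleton, hpp, Ideal.span_singleton_eq_bot]
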